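/- Asymptotic consistency of the optimal values: let α_N ∈ (0,1) with Σ_N α_N < ∞ and ε_N := ε_TV(α_N) → 0, let O be uniformly diagonally dominant, |h(x,ξ)| ≤ L for all (x,ξ) ∈ X×Ξ, and let Ĵ_N = inf_{x∈X} sup_{Q: d_TV(O⋆Q, P̂'_N) ≤ ε_N} E^Q[h(x,ξ)] where P̂'_N is the empirical distribution of N i.i.d. noisy samples. Then Ĵ_N → J* := inf_{x∈X} E^P[h(x,ξ)] almost surely. -/

import Mathlib

open Finset MeasureTheory Real ProbabilityTheory ENNReal


lemma bernoulli_mgf_le (p : ℝ) (hp0 : 0 ≤ p) (hp1 : p ≤ 1) (t : ℝ) :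
    1 - p + p * exp t ≤ exp (t * p + t ^ 2 / 8) := by
  set u : ℝ → ℝ := fun s => 1 - p + p * exp s with hu_def
  have hu_pos : ∀ s, 0 < u s := by
    intro s
    rcases eq_or_lt_of_le hp1 with h | h
    · simp only [hu_def, ← h]
      have := exp_pos s
      nlinarith
    · have h1 : 0 ≤ p * exp s := mul_nonneg hp0 (exp_pos s).le
      simp only [hu_def]; linarith
  have hu_deriv : ∀ s, HasDerivAt u (p * exp s) s := by
    intro s
    exact ((Real.hasDerivAt_exp s).const_mul p).const_add (1 - p)
  set ψ : ℝ → ℝ := fun s => p + s / 4 - p * exp s / u s with hψ_def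
  set g : ℝ → ℝ := fun s => s * p + s ^ 2 / 8 - Real.log (u s) with hg_def
  have hg_deriv : ∀ s, HasDerivAt g (ψ s) s := by
    intro s
    have h1 : HasDerivAt (fun s : ℝ => s * p) p s := by
      simpa using (hasDerivAt_id s).mul_const p
    have h2 : HasDerivAt (fun s : ℝ => s ^ 2 / 8) (s / 4) s := by
      have := (hasDerivAt_pow 2 s).div_const 8
      refine this.congr_deriv ?_
      ring
    have h3 : HasDerivAt (fun s => Real.log (u s)) (p * exp s / u s) s :=
      (hu_deriv s).log (hu_pos s).ne'
    exact (h1.add h2).sub h3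
  have hψ_deriv : ∀ s, HasDerivAt ψ
      ((4 : ℝ)⁻¹ - (p * exp s * u s - p * exp s * (p * exp s)) / u s ^ 2) s := by
    intro s
    have h4 : HasDerivAt (fun s => p * exp s / u s)
        ((p * exp s * u s - p * exp s * (p * exp s)) / u s ^ 2) s :=
      ((Real.hasDerivAt_exp s).const_mul p).div (hu_deriv s) (hu_pos s).ne'
    have h5 : HasDerivAt (fun s : ℝ => p + s / 4) (4 : ℝ)⁻¹ s := by
      simpa using ((hasDerivAt_id s).div_const 4).const_add p
    exact h5.sub h4
  have hψ_mono : Monotone ψ := by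
    refine monotone_of_deriv_nonneg (fun s => (hψ_deriv s).differentiableAt) ?_
    intro s
    rw [(hψ_deriv s).deriv]
    have hu := hu_pos s
    have he : 0 < exp s := exp_pos s
    rw [sub_nonneg, div_le_iff₀ (by positivity)]
    generalize u s = v
    nlinarith [sq_nonneg (v - 2 * (p * exp s))]
  have hψ0 : ψ 0 = 0 := by simp [hψ_def, hu_def]
  have hg0 : g 0 = 0 := by simp [hg_def, hu_def]
  have hg_diff : Differentiable ℝ g := fun s => (hg_deriv s).differentiableAt
  have key : 0 ≤ g t := by
    rcases le_total 0 t with ht | ht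
    · have hmono : MonotoneOn g (Set.Ici (0 : ℝ)) := by
        refine monotoneOn_of_deriv_nonneg (convex_Ici 0) hg_diff.continuous.continuousOn
          (hg_diff.differentiableOn) ?_
        intro x hx
        rw [(hg_deriv x).deriv, ← hψ0]
        exact hψ_mono (le_of_lt (by simpa using hx))
      have := hmono (Set.self_mem_Ici) (Set.mem_Ici.mpr ht) ht
      linarith [hg0 ▸ this]
    · have hanti : AntitoneOn g (Set.Iic (0 : ℝ)) := by
        refine antitoneOn_of_deriv_nonpos (convex_Iic 0) hg_diff.continuous.continuousOn
          (hg_diff.differentiableOn) ?_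
        intro x hx
        rw [(hg_deriv x).deriv, ← hψ0]
        exact hψ_mono (le_of_lt (by simpa using hx))
      have := hanti (Set.mem_Iic.mpr ht) (Set.self_mem_Iic) ht
      linarith [hg0 ▸ this]
  have : Real.log (u t) ≤ t * p + t ^ 2 / 8 := by
    simp only [hg_def] at key; linarith
  calc u t = exp (Real.log (u t)) := (Real.exp_log (hu_pos t)).symm
  _ ≤ exp (t * p + t ^ 2 / 8) := exp_le_exp.mpr this


lemma half_sum_abs {Ξ : Type*} [Fintype Ξ] (a b : Ξ → ℝ)
    (hab : ∑ ξ, a ξ = ∑ ξ, b ξ) :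
    ∑ ξ ∈ Finset.univ.filter (fun ξ => b ξ < a ξ), (a ξ - b ξ)
      = (1/2) * ∑ ξ, |a ξ - b ξ| := by
  classical
  have h0 : ∑ ξ, (a ξ - b ξ) = 0 := by rw [Finset.sum_sub_distrib, hab, sub_self]
  rw [← Finset.sum_filter_add_sum_filter_not Finset.univ (fun ξ => b ξ < a ξ)] at h0
  have h1 : ∑ ξ ∈ Finset.univ.filter (fun ξ => b ξ < a ξ), |a ξ - b ξ|
      = ∑ ξ ∈ Finset.univ.filter (fun ξ => b ξ < a ξ), (a ξ - b ξ) :=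
    Finset.sum_congr rfl fun ξ hξ => abs_of_pos (by
      have := (Finset.mem_filter.mp hξ).2; linarith)
  have h2 : ∑ ξ ∈ Finset.univ.filter (fun ξ => ¬ b ξ < a ξ), |a ξ - b ξ|
      = - ∑ ξ ∈ Finset.univ.filter (fun ξ => ¬ b ξ < a ξ), (a ξ - b ξ) := by
    rw [← Finset.sum_neg_distrib]
    exact Finset.sum_congr rfl fun ξ hξ => abs_of_nonpos (by
      have := (Finset.mem_filter.mp hξ).2; push_neg at this; linarith)
  rw [← Finset.sum_filter_add_sum_filter_not Finset.univ (fun ξ => b ξ < a ξ) (fun ξ => |a ξ - b ξ|),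
    h1, h2]
  linarith

lemma contraction_aux {Ξ : Type*} [Fintype Ξ] [DecidableEq Ξ] (O : Ξ → Ξ → ℝ)
    (hO_nonneg : ∀ ξ' ξ, 0 ≤ O ξ' ξ) (hO_sum : ∀ ξ, ∑ ξ', O ξ' ξ = 1)
    (w : Ξ → ℝ) :
    ∑ ξ, (2 * O ξ ξ - 1) * |w ξ| ≤ ∑ ξ', |∑ ξ, O ξ' ξ * w ξ| := by
  have swap : ∑ ξ' : Ξ, ∑ ξ, O ξ' ξ * |w ξ| = ∑ ξ, |w ξ| := by
    rw [Finset.sum_comm]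
    simp_rw [← Finset.sum_mul, hO_sum, one_mul]
  have key : ∀ ξ' : Ξ, O ξ' ξ' * |w ξ'| - (∑ ξ, O ξ' ξ * |w ξ| - O ξ' ξ' * |w ξ'|)
      ≤ |∑ ξ, O ξ' ξ * w ξ| := by
    intro ξ'
    have e1 : ∑ ξ, O ξ' ξ * w ξ
        = O ξ' ξ' * w ξ' + ∑ ξ ∈ Finset.univ.erase ξ', O ξ' ξ * w ξ :=
      (Finset.add_sum_erase _ _ (Finset.mem_univ ξ')).symm
    have e2 : |∑ ξ ∈ Finset.univ.erase ξ', O ξ' ξ * w ξ|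
        ≤ ∑ ξ ∈ Finset.univ.erase ξ', O ξ' ξ * |w ξ| := by
      refine (Finset.abs_sum_le_sum_abs _ _).trans (le_of_eq ?_)
      exact Finset.sum_congr rfl fun ξ _ => by
        rw [abs_mul, abs_of_nonneg (hO_nonneg ξ' ξ)]
    have e3 : ∑ ξ ∈ Finset.univ.erase ξ', O ξ' ξ * |w ξ|
        = ∑ ξ, O ξ' ξ * |w ξ| - O ξ' ξ' * |w ξ'| := by
      rw [← Finset.add_sum_erase _ _ (Finset.mem_univ ξ')]; ring
    have e4 : |O ξ' ξ' * w ξ'| = O ξ' ξ' * |w ξ'| := by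
      rw [abs_mul, abs_of_nonneg (hO_nonneg ξ' ξ')]
    calc O ξ' ξ' * |w ξ'| - (∑ ξ, O ξ' ξ * |w ξ| - O ξ' ξ' * |w ξ'|)
        ≤ O ξ' ξ' * |w ξ'| - |∑ ξ ∈ Finset.univ.erase ξ', O ξ' ξ * w ξ| := by
          rw [← e3]; linarith
      _ = |O ξ' ξ' * w ξ'| - |-(∑ ξ ∈ Finset.univ.erase ξ', O ξ' ξ * w ξ)| := by
          rw [e4, abs_neg]
      _ ≤ |O ξ' ξ' * w ξ' - -(∑ ξ ∈ Finset.univ.erase ξ', O ξ' ξ * w ξ)| :=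
          abs_sub_abs_le_abs_sub _ _
      _ = |∑ ξ, O ξ' ξ * w ξ| := by rw [e1]; ring_nf
  calc ∑ ξ, (2 * O ξ ξ - 1) * |w ξ|
      = ∑ ξ', (O ξ' ξ' * |w ξ'| - (∑ ξ, O ξ' ξ * |w ξ| - O ξ' ξ' * |w ξ'|)) := by
        have hL : ∑ ξ, (2 * O ξ ξ - 1) * |w ξ|
            = 2 * ∑ ξ, O ξ ξ * |w ξ| - ∑ ξ, |w ξ| := by
          rw [Finset.mul_sum, ← Finset.sum_sub_distrib]
          exact Finset.sum_congr rfl fun ξ _ => by ring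
        have hR : ∑ ξ' : Ξ, (O ξ' ξ' * |w ξ'| - (∑ ξ, O ξ' ξ * |w ξ| - O ξ' ξ' * |w ξ'|))
            = 2 * ∑ ξ, O ξ ξ * |w ξ| - ∑ ξ, |w ξ| := by
          rw [Finset.sum_sub_distrib, Finset.sum_sub_distrib, swap]
          ring
        rw [hL, hR]
    _ ≤ ∑ ξ', |∑ ξ, O ξ' ξ * w ξ| := Finset.sum_le_sum fun ξ' _ => key ξ'


lemma exp_mul_indicator_eq {Ω : Type*} (S : Set Ω) (t : ℝ) :
    (fun ω => Real.exp (t * S.indicator (fun _ => (1:ℝ)) ω))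
      = fun ω => S.indicator (fun _ => Real.exp t - 1) ω + 1 := by
  classical
  funext ω
  by_cases hω : ω ∈ S <;>
    simp [Set.indicator_of_mem, Set.indicator_of_notMem, hω]

lemma integrable_exp_mul_indicator {Ω : Type*} [MeasurableSpace Ω] (μ : Measure Ω)
    [IsProbabilityMeasure μ] {S : Set Ω} (hS : MeasurableSet S) (t : ℝ) :
    Integrable (fun ω => Real.exp (t * S.indicator (fun _ => (1:ℝ)) ω)) μ := by
  rw [exp_mul_indicator_eq]
  exact ((integrable_const _).indicator hS).add (integrable_const 1)

lemma mgf_indicator {Ω : Type*} [MeasurableSpace Ω] (μ : Measure Ω)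
    [IsProbabilityMeasure μ] {S : Set Ω} (hS : MeasurableSet S) (t : ℝ) :
    mgf (S.indicator (fun _ => (1:ℝ))) μ t
      = 1 - (μ S).toReal + (μ S).toReal * Real.exp t := by
  have : mgf (S.indicator (fun _ => (1:ℝ))) μ t
      = ∫ ω, (S.indicator (fun _ => Real.exp t - 1) ω + 1) ∂μ := by
    rw [mgf, ← exp_mul_indicator_eq]
  rw [this, integral_add ((integrable_const _).indicator hS) (integrable_const 1),
    integral_indicator_const _ hS, integral_const]
  simp only [measureReal_def, measure_univ, ENNReal.toReal_one, smul_eq_mul, one_smul]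
  ring

lemma chernoff_indicator {Ω : Type*} [MeasurableSpace Ω] (μ : Measure Ω)
    [IsProbabilityMeasure μ] (S : ℕ → Set Ω) (hS : ∀ i, MeasurableSet (S i))
    (Y : ℕ → Ω → ℝ) (hY : ∀ i, Y i = (S i).indicator (fun _ => (1:ℝ)))
    (hindep : iIndepFun Y μ)
    (p : ℝ) (hp : ∀ i, (μ (S i)).toReal = p)
    (N : ℕ) (e : ℝ) (he : 0 ≤ e) :
    (μ {ω | (N : ℝ) * (p + e) ≤ ∑ i ∈ Finset.range N, Y i ω}).toReal
      ≤ Real.exp (-(2 * N * e ^ 2)) := by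
  classical
  set t : ℝ := 4 * e with ht_def
  have ht : 0 ≤ t := by positivity
  have hp0 : 0 ≤ p := (hp 0) ▸ ENNReal.toReal_nonneg
  have hp1 : p ≤ 1 := by
    rw [← hp 0]
    exact ENNReal.toReal_le_of_le_ofReal zero_le_one (by simpa using prob_le_one)
  have hYmeas : ∀ i, Measurable (Y i) := fun i => by
    rw [hY i]; exact measurable_const.indicator (hS i)
  have h_int : ∀ i, Integrable (fun ω => Real.exp (t * Y i ω)) μ := fun i => by
    rw [hY i]; exact integrable_exp_mul_indicator μ (hS i) t
  have h_int_sum : Integrable (fun ω => Real.exp (t * (∑ i ∈ Finset.range N, Y i) ω)) μ :=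
    hindep.integrable_exp_mul_sum hYmeas (fun i _ => h_int i)
  have hmgf_i : ∀ i, mgf (Y i) μ t = 1 - p + p * Real.exp t := fun i => by
    rw [hY i, mgf_indicator μ (hS i) t, hp i]
  have hmgf : mgf (∑ i ∈ Finset.range N, Y i) μ t ≤ Real.exp (N * (t * p + t ^ 2 / 8)) := by
    rw [hindep.mgf_sum hYmeas]
    calc ∏ i ∈ Finset.range N, mgf (Y i) μ t
        = (1 - p + p * Real.exp t) ^ N := by
          rw [Finset.prod_congr rfl fun i _ => hmgf_i i, Finset.prod_const, Finset.card_range]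
      _ ≤ Real.exp (t * p + t ^ 2 / 8) ^ N := by
          apply pow_le_pow_left₀ ?_ (bernoulli_mgf_le p hp0 hp1 t)
          nlinarith [Real.exp_pos t]
      _ = Real.exp (N * (t * p + t ^ 2 / 8)) := by
          rw [← Real.exp_nat_mul]
  have hset : {ω | (N : ℝ) * (p + e) ≤ ∑ i ∈ Finset.range N, Y i ω}
      = {ω | (N : ℝ) * (p + e) ≤ (∑ i ∈ Finset.range N, Y i) ω} := by
    simp only [Finset.sum_apply]
  calc (μ {ω | (N : ℝ) * (p + e) ≤ ∑ i ∈ Finset.range N, Y i ω}).toReal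
      ≤ Real.exp (-t * ((N : ℝ) * (p + e))) * mgf (∑ i ∈ Finset.range N, Y i) μ t := by
        rw [hset]
        exact measure_ge_le_exp_mul_mgf _ ht h_int_sum
    _ ≤ Real.exp (-t * ((N : ℝ) * (p + e))) * Real.exp (N * (t * p + t ^ 2 / 8)) := by
        exact mul_le_mul_of_nonneg_left hmgf (Real.exp_pos _).le
    _ = Real.exp (-(2 * N * e ^ 2)) := by
        rw [← Real.exp_add]
        congr 1
        rw [ht_def]
        ring
/-- asymptotic consistency of the optimal values of the
distributionally-robust optimization problems with noisy data. -/
theorem stmt11 {Ξ : Type*} [Fintype Ξ] [DecidableEq Ξ] [Nonempty Ξ]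
    [MeasurableSpace Ξ] [MeasurableSingletonClass Ξ]
    {n : ℕ} (X : Set (Fin n → ℝ)) (hX : X.Nonempty)
    (h : (Fin n → ℝ) → Ξ → ℝ) (L : ℝ)
    (hL : ∀ x ∈ X, ∀ ξ : Ξ, |h x ξ| ≤ L)
    -- true distribution P on Ξ
    (P : Ξ → ℝ) (hP_nonneg : ∀ ξ, 0 ≤ P ξ) (hP_sum : ∑ ξ, P ξ = 1)
    -- noise conditional distribution, uniformly diagonally dominant
    (O : Ξ → Ξ → ℝ) (hO_nonneg : ∀ ξ' ξ, 0 ≤ O ξ' ξ) (hO_sum : ∀ ξ, ∑ ξ', O ξ' ξ = 1)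
    (hdd : ∀ ξ ξ₁ ξ₂, ξ₁ ≠ ξ₂ → (Fintype.card Ξ : ℝ) * O ξ₂ ξ₁ < O ξ ξ)
    -- confidence levels and radii
    (α : ℕ → ℝ) (hα : ∀ N, α N ∈ Set.Ioo (0:ℝ) 1)
    (hα_sum : Summable α)
    (ε : ℕ → ℝ)
    (hε : ∀ N : ℕ, ε N =
      Real.sqrt (max (Fintype.card Ξ : ℝ) (2 * Real.log (2 / α N)) / N))
    (hε0 : Filter.Tendsto ε Filter.atTop (nhds 0))
    -- i.i.d. noisy samples on a probability space, with law P' = O⋆P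
    {Ω : Type*} [MeasurableSpace Ω] (μ : Measure Ω) [IsProbabilityMeasure μ]
    (ξs : ℕ → Ω → Ξ) (hmeas : ∀ i, Measurable (ξs i))
    (hlaw : ∀ i, ∀ ξ' : Ξ, μ {ω | ξs i ω = ξ'} = ENNReal.ofReal (∑ ξ, O ξ' ξ * P ξ))
    (hindep : ProbabilityTheory.iIndepFun ξs μ)
    -- empirical distribution of the first N noisy samples
    (Phat : ℕ → Ω → Ξ → ℝ)
    (hPhat : ∀ N ω ξ, Phat N ω ξ =
      (∑ i ∈ Finset.range N, if ξs i ω = ξ then (1:ℝ) else 0) / N)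
    -- DRO optimal values and the true optimal value
    (Jhat : ℕ → Ω → ℝ)
    (hJhat : ∀ N ω, Jhat N ω = sInf {v : ℝ | ∃ x ∈ X,
      v = sSup {u : ℝ | ∃ Q : Ξ → ℝ, (∀ ξ, 0 ≤ Q ξ) ∧ (∑ ξ, Q ξ = 1) ∧
        (1/2) * ∑ ξ', |(∑ ξ, O ξ' ξ * Q ξ) - Phat N ω ξ'| ≤ ε N ∧
        u = ∑ ξ, h x ξ * Q ξ}})
    (Jstar : ℝ) (hJstar : Jstar = sInf {v : ℝ | ∃ x ∈ X, v = ∑ ξ, h x ξ * P ξ}) :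
    ∀ᵐ ω ∂μ, Filter.Tendsto (fun N => Jhat N ω) Filter.atTop (nhds Jstar) := by
  classical
  obtain ⟨x₀, hx₀⟩ := id hX
  obtain ⟨ξ₀⟩ := (inferInstance : Nonempty Ξ)
  have hL0 : 0 ≤ L := (abs_nonneg _).trans (hL x₀ hx₀ ξ₀)
  have hd1 : (1:ℝ) ≤ Fintype.card Ξ := by exact_mod_cast Fintype.card_pos
  set P' : Ξ → ℝ := fun ξ' => ∑ ξ, O ξ' ξ * P ξ with hP'_def
  have hP'_nonneg : ∀ ξ', 0 ≤ P' ξ' := fun ξ' =>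
    Finset.sum_nonneg fun ξ _ => mul_nonneg (hO_nonneg _ _) (hP_nonneg _)
  have hP'_sum : ∑ ξ', P' ξ' = 1 := by
    simp only [hP'_def]
    rw [Finset.sum_comm]
    simp_rw [← Finset.sum_mul, hO_sum, one_mul]
    exact hP_sum
  have hε_nonneg : ∀ N, 0 ≤ ε N := fun N => (hε N) ▸ Real.sqrt_nonneg _
  -- diagonal entries exceed 1/2
  have hdiag : ∀ ξ, 1 - O ξ ξ < O ξ ξ := by
    intro ξ
    have hrow : O ξ ξ + ∑ ξ' ∈ Finset.univ.erase ξ, O ξ' ξ = 1 := by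
      have h0 := Finset.add_sum_erase Finset.univ (fun ξ' => O ξ' ξ) (Finset.mem_univ ξ)
      rw [h0]
      exact hO_sum ξ
    rcases Finset.eq_empty_or_nonempty (Finset.univ.erase ξ) with he | he
    · rw [he, Finset.sum_empty] at hrow
      linarith
    · obtain ⟨ξ'', hξ''⟩ := he
      have hbound : ∑ ξ' ∈ Finset.univ.erase ξ, O ξ' ξ < O ξ ξ := by
        have hcard : (0:ℝ) < Fintype.card Ξ := by linarith
        have hlt : ∀ b ∈ Finset.univ.erase ξ, O b ξ < O ξ ξ / Fintype.card Ξ := by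
          intro b hb
          rw [lt_div_iff₀ hcard]
          have := hdd ξ ξ b (Finset.ne_of_mem_erase hb).symm
          linarith
        have hOpos : 0 < O ξ ξ := by
          have h1 := hdd ξ ξ ξ'' (Finset.ne_of_mem_erase hξ'').symm
          have h2 : 0 ≤ (Fintype.card Ξ : ℝ) * O ξ'' ξ :=
            mul_nonneg hcard.le (hO_nonneg _ _)
          linarith
        calc ∑ ξ' ∈ Finset.univ.erase ξ, O ξ' ξ
            < ∑ _ξ' ∈ Finset.univ.erase ξ, (O ξ ξ / Fintype.card Ξ) :=
              Finset.sum_lt_sum_of_nonempty ⟨ξ'', hξ''⟩ hlt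
          _ = ((Finset.univ.erase ξ).card : ℝ) * (O ξ ξ / Fintype.card Ξ) := by
              rw [Finset.sum_const, nsmul_eq_mul]
          _ ≤ (Fintype.card Ξ : ℝ) * (O ξ ξ / Fintype.card Ξ) := by
              refine mul_le_mul_of_nonneg_right ?_ (by positivity)
              have hcc := Finset.card_le_univ (Finset.univ.erase ξ)
              exact_mod_cast hcc
          _ = O ξ ξ := by field_simp
      linarith
  -- the contraction constant
  set c : ℝ := 2 * (Finset.univ.inf' Finset.univ_nonempty fun ξ => O ξ ξ) - 1 with hc_def
  have hc_le : ∀ ξ, c ≤ 2 * O ξ ξ - 1 := by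
    intro ξ
    have := Finset.inf'_le (fun ξ => O ξ ξ) (Finset.mem_univ ξ)
    simp only [hc_def]
    linarith
  have hc_pos : 0 < c := by
    obtain ⟨ξm, -, hm⟩ := Finset.exists_mem_eq_inf' (Finset.univ_nonempty (α := Ξ))
      (fun ξ => O ξ ξ)
    have := hdiag ξm
    rw [hc_def, hm]
    linarith
  have hcontr : ∀ w : Ξ → ℝ, c * ∑ ξ, |w ξ| ≤ ∑ ξ', |∑ ξ, O ξ' ξ * w ξ| := by
    intro w
    refine le_trans ?_ (contraction_aux O hO_nonneg hO_sum w)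
    rw [Finset.mul_sum]
    exact Finset.sum_le_sum fun ξ _ => mul_le_mul_of_nonneg_right (hc_le ξ) (abs_nonneg _)
  -- tail bound via Chernoff + union bound
  have htail : ∀ N : ℕ, 1 ≤ N →
      μ {ω | ε N < (1/2) * ∑ ξ', |Phat N ω ξ' - P' ξ'|} ≤ ENNReal.ofReal (α N) := by
    intro N hN
    have hNpos : (0:ℝ) < N := by exact_mod_cast hN
    have hSmeas : ∀ (i : ℕ) (A : Finset Ξ), MeasurableSet (ξs i ⁻¹' (A : Set Ξ)) := fun i A =>
      (hmeas i) ((A : Set Ξ).toFinite.measurableSet)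
    have hμA : ∀ (i : ℕ) (A : Finset Ξ),
        (μ (ξs i ⁻¹' (A : Set Ξ))).toReal = ∑ ξ' ∈ A, P' ξ' := by
      intro i A
      have hun : ξs i ⁻¹' (A : Set Ξ) = ⋃ ξ' ∈ A, {ω | ξs i ω = ξ'} := by
        ext ω
        simp only [Set.mem_preimage, Finset.mem_coe, Set.mem_iUnion, Set.mem_setOf_eq,
          exists_prop]
        exact ⟨fun hh => ⟨_, hh, rfl⟩, fun ⟨ξ', h1, h2⟩ => h2 ▸ h1⟩
      rw [hun, measure_biUnion_finset ?disj ?meas]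
      · rw [show ∑ ξ' ∈ A, μ {ω | ξs i ω = ξ'} = ∑ ξ' ∈ A, ENNReal.ofReal (P' ξ') from
          Finset.sum_congr rfl fun ξ' _ => hlaw i ξ']
        rw [← ENNReal.ofReal_sum_of_nonneg fun ξ' _ => hP'_nonneg ξ']
        exact ENNReal.toReal_ofReal (Finset.sum_nonneg fun ξ' _ => hP'_nonneg ξ')
      case disj =>
        intro a _ b _ hab
        refine Set.disjoint_left.mpr fun {ω} h1 h2 => hab ?_
        simp only [Set.mem_setOf_eq] at h1 h2
        rw [← h1, ← h2]
      case meas =>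
        intro ξ' _
        exact (hmeas i) (measurableSet_singleton ξ')
    have hsub : {ω | ε N < (1/2) * ∑ ξ', |Phat N ω ξ' - P' ξ'|} ⊆
        ⋃ A ∈ (Finset.univ : Finset (Finset Ξ)),
          {ω | (N:ℝ) * ((∑ ξ' ∈ A, P' ξ') + ε N) ≤
            ∑ i ∈ Finset.range N, (ξs i ⁻¹' (A : Set Ξ)).indicator (fun _ => (1:ℝ)) ω} := by
      intro ω hω
      simp only [Set.mem_setOf_eq] at hω
      set A : Finset Ξ := Finset.univ.filter (fun ξ' => P' ξ' < Phat N ω ξ') with hA_def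
      have hPhat_sum : ∑ ξ', Phat N ω ξ' = 1 := by
        simp only [hPhat]
        rw [← Finset.sum_div, Finset.sum_comm]
        rw [Finset.sum_congr rfl (fun i _ => by
          rw [Finset.sum_ite_eq]
          simp : ∀ i ∈ Finset.range N, ∑ ξ : Ξ, (if ξs i ω = ξ then (1:ℝ) else 0) = 1)]
        rw [Finset.sum_const, Finset.card_range, nsmul_eq_mul, mul_one]
        field_simp
      have hhalf := half_sum_abs (Phat N ω) P' (by rw [hPhat_sum, hP'_sum])
      rw [← hhalf] at hω
      have hYsum : ∑ ξ' ∈ A, Phat N ω ξ' =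
          (∑ i ∈ Finset.range N, (ξs i ⁻¹' (A : Set Ξ)).indicator (fun _ => (1:ℝ)) ω) / N := by
        simp only [hPhat]
        rw [← Finset.sum_div]
        congr 1
        rw [Finset.sum_comm]
        refine Finset.sum_congr rfl fun i _ => ?_
        rw [Finset.sum_ite_eq]
        by_cases hm : ξs i ω ∈ A <;>
          simp [Set.indicator_apply, Set.mem_preimage, hm]
      refine Set.mem_biUnion (Finset.mem_univ A) ?_
      simp only [Set.mem_setOf_eq]
      have hlt : (∑ ξ' ∈ A, P' ξ') + ε N < ∑ ξ' ∈ A, Phat N ω ξ' := by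
        rw [Finset.sum_sub_distrib] at hω
        linarith
      rw [hYsum, lt_div_iff₀ hNpos] at hlt
      nlinarith [hlt]
    calc μ {ω | ε N < (1/2) * ∑ ξ', |Phat N ω ξ' - P' ξ'|}
        ≤ ∑ A ∈ (Finset.univ : Finset (Finset Ξ)),
            μ {ω | (N:ℝ) * ((∑ ξ' ∈ A, P' ξ') + ε N) ≤
              ∑ i ∈ Finset.range N, (ξs i ⁻¹' (A : Set Ξ)).indicator (fun _ => (1:ℝ)) ω} :=
          (measure_mono hsub).trans (measure_biUnion_finset_le _ _)
      _ ≤ ∑ _A ∈ (Finset.univ : Finset (Finset Ξ)),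
            ENNReal.ofReal (Real.exp (-(2 * N * (ε N)^2))) := by
          refine Finset.sum_le_sum fun A _ => ?_
          have hind : ProbabilityTheory.iIndepFun
              (fun i => (ξs i ⁻¹' (A : Set Ξ)).indicator (fun _ => (1:ℝ))) μ := by
            have hcomp := hindep.comp (fun _ ξ => if ξ ∈ A then (1:ℝ) else 0)
              (fun _ => measurable_of_countable _)
            have hYeq : (fun i => (fun ξ => if ξ ∈ A then (1:ℝ) else 0) ∘ ξs i)
                = fun i => (ξs i ⁻¹' (A : Set Ξ)).indicator (fun _ => (1:ℝ)) := by
              funext i ω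
              by_cases hm : ξs i ω ∈ A <;>
                simp [Function.comp, Set.indicator_apply, Set.mem_preimage, hm]
            rwa [hYeq] at hcomp
          have hch := chernoff_indicator μ (fun i => ξs i ⁻¹' (A : Set Ξ))
            (fun i => hSmeas i A)
            (fun i => (ξs i ⁻¹' (A : Set Ξ)).indicator (fun _ => (1:ℝ))) (fun i => rfl)
            hind (∑ ξ' ∈ A, P' ξ') (fun i => hμA i A) N (ε N) (hε_nonneg N)
          have hne : μ {ω | (N:ℝ) * ((∑ ξ' ∈ A, P' ξ') + ε N) ≤
              ∑ i ∈ Finset.range N, (ξs i ⁻¹' (A : Set Ξ)).indicator (fun _ => (1:ℝ)) ω} ≠ ⊤ :=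
            measure_ne_top _ _
          rw [← ENNReal.ofReal_toReal hne]
          exact ENNReal.ofReal_le_ofReal hch
      _ ≤ ENNReal.ofReal (α N) := by
          rw [Finset.sum_const, Finset.card_univ, nsmul_eq_mul]
          have hcast : ((Fintype.card (Finset Ξ) : ℕ) : ℝ≥0∞)
              = ENNReal.ofReal ((2:ℝ) ^ Fintype.card Ξ) := by
            rw [Fintype.card_finset]
            rw [← ENNReal.ofReal_natCast]
            congr 1
            push_cast
            ring
          rw [hcast, ← ENNReal.ofReal_mul (by positivity)]
          refine ENNReal.ofReal_le_ofReal ?_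
          -- the purely numeric estimate
          have hα0 := (hα N).1
          have hα1 := (hα N).2
          have hε2 : (ε N)^2 = max ((Fintype.card Ξ) : ℝ) (2 * Real.log (2 / α N)) / N := by
            rw [hε N, Real.sq_sqrt (div_nonneg (le_trans (by positivity)
              (le_max_left _ _)) (Nat.cast_nonneg N))]
          have hNe : (N:ℝ) ≠ 0 := ne_of_gt hNpos
          have h2N : 2 * (N:ℝ) * (ε N)^2
              = 2 * max ((Fintype.card Ξ) : ℝ) (2 * Real.log (2 / α N)) := by
            rw [hε2]
            field_simp
          have hm1 : ((Fintype.card Ξ) : ℝ)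
              ≤ max ((Fintype.card Ξ) : ℝ) (2 * Real.log (2 / α N)) := le_max_left _ _
          have hm2 : 2 * Real.log (2 / α N)
              ≤ max ((Fintype.card Ξ) : ℝ) (2 * Real.log (2 / α N)) := le_max_right _ _
          have hexp1 : Real.exp (-(2 * N * (ε N)^2))
              ≤ Real.exp (-((Fintype.card Ξ) : ℝ)) * Real.exp (-(2 * Real.log (2 / α N))) := by
            rw [← Real.exp_add]
            apply Real.exp_le_exp.mpr
            rw [h2N]
            linarith
          have hlog : Real.exp (-(2 * Real.log (2 / α N))) = (α N / 2)^2 := by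
            have hstep : -(2 * Real.log (2 / α N)) = 2 * Real.log (α N / 2) := by
              have hli : Real.log (α N / 2) = - Real.log (2 / α N) := by
                rw [← Real.log_inv, inv_div]
              rw [hli]; ring
            rw [hstep,
              show (2:ℝ) * Real.log (α N / 2) = ((2:ℕ):ℝ) * Real.log (α N / 2) by norm_num,
              Real.exp_nat_mul, Real.exp_log (by positivity)]
          have hpow : (2:ℝ) ^ Fintype.card Ξ * Real.exp (-((Fintype.card Ξ) : ℝ)) ≤ 1 := by
            have he1 : Real.exp (-((Fintype.card Ξ) : ℝ))
                = Real.exp (-1) ^ Fintype.card Ξ := by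
              rw [← Real.exp_nat_mul]
              congr 1
              push_cast
              ring
            rw [he1, ← mul_pow]
            refine pow_le_one₀ (by positivity) ?_
            have hepos : (0:ℝ) < Real.exp 1 := Real.exp_pos 1
            rw [Real.exp_neg]
            have hinv := mul_inv_cancel₀ (ne_of_gt hepos)
            nlinarith [Real.exp_one_gt_d9]
          calc (2:ℝ) ^ Fintype.card Ξ * Real.exp (-(2 * N * (ε N)^2))
              ≤ (2:ℝ) ^ Fintype.card Ξ *
                (Real.exp (-((Fintype.card Ξ) : ℝ)) * Real.exp (-(2 * Real.log (2 / α N)))) :=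
                mul_le_mul_of_nonneg_left hexp1 (by positivity)
            _ = ((2:ℝ) ^ Fintype.card Ξ * Real.exp (-((Fintype.card Ξ) : ℝ))) * (α N / 2)^2 := by
                rw [hlog]; ring
            _ ≤ 1 * (α N / 2)^2 := mul_le_mul_of_nonneg_right hpow (by positivity)
            _ ≤ α N := by nlinarith
  -- Borel–Cantelli
  set sN : ℕ → Set Ω := fun N =>
    if N = 0 then ∅ else {ω | ε N < (1/2) * ∑ ξ', |Phat N ω ξ' - P' ξ'|} with hsN
  have hsum_ne : (∑' N, μ (sN N)) ≠ ⊤ := by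
    have hle : ∀ N, μ (sN N) ≤ ENNReal.ofReal (α N) := by
      intro N
      by_cases hN0 : N = 0
      · simp [hsN, hN0]
      · simp only [hsN, if_neg hN0]
        exact htail N (Nat.one_le_iff_ne_zero.mpr hN0)
    refine ne_top_of_le_ne_top ?_ (ENNReal.tsum_le_tsum hle)
    rw [← ENNReal.ofReal_tsum_of_nonneg (fun n => (hα n).1.le) hα_sum]
    exact ENNReal.ofReal_ne_top
  have hae := MeasureTheory.ae_eventually_notMem hsum_ne
  filter_upwards [hae] with ω hω
  have hgood : ∀ᶠ N in Filter.atTop, (1/2) * ∑ ξ', |Phat N ω ξ' - P' ξ'| ≤ ε N := by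
    filter_upwards [hω, Filter.eventually_ge_atTop 1] with N h1 h2
    by_contra hcon
    push_neg at hcon
    refine h1 ?_
    simp only [hsN, if_neg (by omega : N ≠ 0)]
    exact hcon
  -- deterministic part
  have hfinal : ∀ᶠ N in Filter.atTop,
      Jstar - 4 * L / c * ε N ≤ Jhat N ω ∧ Jhat N ω ≤ Jstar + 4 * L / c * ε N := by
    filter_upwards [hgood] with N hg
    have hδ0 : 0 ≤ 4 * L / c * ε N :=
      mul_nonneg (div_nonneg (by linarith) hc_pos.le) (hε_nonneg N)
    have hPc : (1/2) * ∑ ξ', |(∑ ξ, O ξ' ξ * P ξ) - Phat N ω ξ'| ≤ ε N := by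
      refine le_trans (le_of_eq ?_) hg
      congr 1
      refine Finset.sum_congr rfl fun ξ' _ => ?_
      rw [abs_sub_comm]
    have hkey : ∀ x ∈ X,
        (∑ ξ, h x ξ * P ξ) ≤ sSup {u : ℝ | ∃ Q : Ξ → ℝ, (∀ ξ, 0 ≤ Q ξ) ∧ (∑ ξ, Q ξ = 1) ∧
            (1/2) * ∑ ξ', |(∑ ξ, O ξ' ξ * Q ξ) - Phat N ω ξ'| ≤ ε N ∧
            u = ∑ ξ, h x ξ * Q ξ} ∧
          sSup {u : ℝ | ∃ Q : Ξ → ℝ, (∀ ξ, 0 ≤ Q ξ) ∧ (∑ ξ, Q ξ = 1) ∧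
            (1/2) * ∑ ξ', |(∑ ξ, O ξ' ξ * Q ξ) - Phat N ω ξ'| ≤ ε N ∧
            u = ∑ ξ, h x ξ * Q ξ} ≤ (∑ ξ, h x ξ * P ξ) + 4 * L / c * ε N := by
      intro x hx
      have hmemP : (∑ ξ, h x ξ * P ξ) ∈ {u : ℝ | ∃ Q : Ξ → ℝ, (∀ ξ, 0 ≤ Q ξ) ∧
          (∑ ξ, Q ξ = 1) ∧ (1/2) * ∑ ξ', |(∑ ξ, O ξ' ξ * Q ξ) - Phat N ω ξ'| ≤ ε N ∧
          u = ∑ ξ, h x ξ * Q ξ} := ⟨P, hP_nonneg, hP_sum, hPc, rfl⟩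
      have hub : ∀ u ∈ {u : ℝ | ∃ Q : Ξ → ℝ, (∀ ξ, 0 ≤ Q ξ) ∧ (∑ ξ, Q ξ = 1) ∧
          (1/2) * ∑ ξ', |(∑ ξ, O ξ' ξ * Q ξ) - Phat N ω ξ'| ≤ ε N ∧
          u = ∑ ξ, h x ξ * Q ξ}, u ≤ (∑ ξ, h x ξ * P ξ) + 4 * L / c * ε N := by
        rintro u ⟨Q, hQ0, hQ1, hQc, rfl⟩
        have hQP : ∑ ξ, |Q ξ - P ξ| ≤ 4 * ε N / c := by
          have h1 := hcontr (fun ξ => Q ξ - P ξ)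
          have h2 : ∑ ξ', |∑ ξ, O ξ' ξ * (Q ξ - P ξ)| ≤ 4 * ε N := by
            have he : ∀ ξ' : Ξ, |∑ ξ, O ξ' ξ * (Q ξ - P ξ)| ≤
                |(∑ ξ, O ξ' ξ * Q ξ) - Phat N ω ξ'| +
                |(∑ ξ, O ξ' ξ * P ξ) - Phat N ω ξ'| := by
              intro ξ'
              have heq : ∑ ξ, O ξ' ξ * (Q ξ - P ξ)
                  = ((∑ ξ, O ξ' ξ * Q ξ) - Phat N ω ξ')
                    - ((∑ ξ, O ξ' ξ * P ξ) - Phat N ω ξ') := by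
                simp_rw [mul_sub]
                rw [Finset.sum_sub_distrib]
                ring
              rw [heq]
              exact abs_sub _ _
            calc ∑ ξ', |∑ ξ, O ξ' ξ * (Q ξ - P ξ)|
                ≤ ∑ ξ', (|(∑ ξ, O ξ' ξ * Q ξ) - Phat N ω ξ'| +
                    |(∑ ξ, O ξ' ξ * P ξ) - Phat N ω ξ'|) :=
                  Finset.sum_le_sum fun ξ' _ => he ξ'
              _ = (∑ ξ', |(∑ ξ, O ξ' ξ * Q ξ) - Phat N ω ξ'|) +
                  ∑ ξ', |(∑ ξ, O ξ' ξ * P ξ) - Phat N ω ξ'| := Finset.sum_add_distrib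
              _ ≤ 4 * ε N := by linarith
          rw [le_div_iff₀ hc_pos]
          have h3 := h1.trans h2
          linarith
        have habs : |(∑ ξ, h x ξ * Q ξ) - ∑ ξ, h x ξ * P ξ| ≤ L * (4 * ε N / c) := by
          rw [← Finset.sum_sub_distrib]
          refine le_trans (Finset.abs_sum_le_sum_abs _ _) ?_
          calc ∑ ξ, |h x ξ * Q ξ - h x ξ * P ξ|
              = ∑ ξ, |h x ξ| * |Q ξ - P ξ| := by
                refine Finset.sum_congr rfl fun ξ _ => ?_
                rw [← mul_sub, abs_mul]
            _ ≤ ∑ ξ, L * |Q ξ - P ξ| :=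
                Finset.sum_le_sum fun ξ _ =>
                  mul_le_mul_of_nonneg_right (hL x hx ξ) (abs_nonneg _)
            _ = L * ∑ ξ, |Q ξ - P ξ| := (Finset.mul_sum _ _ _).symm
            _ ≤ L * (4 * ε N / c) := mul_le_mul_of_nonneg_left hQP hL0
        have hLeq : L * (4 * ε N / c) = 4 * L / c * ε N := by
          field_simp
        have h4 := (abs_le.mp habs).2
        linarith
      exact ⟨le_csSup ⟨_, hub⟩ hmemP, csSup_le ⟨_, hmemP⟩ hub⟩
    have hgxlb : ∀ x ∈ X, -L ≤ ∑ ξ, h x ξ * P ξ := by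
      intro x hx
      have habs : |∑ ξ, h x ξ * P ξ| ≤ L := by
        refine le_trans (Finset.abs_sum_le_sum_abs _ _) ?_
        calc ∑ ξ, |h x ξ * P ξ|
            ≤ ∑ ξ, L * P ξ := Finset.sum_le_sum fun ξ _ => by
              rw [abs_mul, abs_of_nonneg (hP_nonneg ξ)]
              exact mul_le_mul_of_nonneg_right (hL x hx ξ) (hP_nonneg ξ)
          _ = L := by rw [← Finset.mul_sum, hP_sum, mul_one]
      linarith [(abs_le.mp habs).1]
    have hBbdd : BddBelow {v : ℝ | ∃ x ∈ X, v = ∑ ξ, h x ξ * P ξ} := by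
      refine ⟨-L, ?_⟩
      rintro v ⟨x, hx, rfl⟩
      exact hgxlb x hx
    have hAbdd : BddBelow {v : ℝ | ∃ x ∈ X,
        v = sSup {u : ℝ | ∃ Q : Ξ → ℝ, (∀ ξ, 0 ≤ Q ξ) ∧ (∑ ξ, Q ξ = 1) ∧
          (1/2) * ∑ ξ', |(∑ ξ, O ξ' ξ * Q ξ) - Phat N ω ξ'| ≤ ε N ∧
          u = ∑ ξ, h x ξ * Q ξ}} := by
      refine ⟨-L, ?_⟩
      rintro v ⟨x, hx, rfl⟩
      exact le_trans (hgxlb x hx) (hkey x hx).1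
    have hlow : Jstar ≤ Jhat N ω := by
      rw [hJhat N ω, hJstar]
      refine le_csInf ⟨_, x₀, hx₀, rfl⟩ ?_
      rintro v ⟨x, hx, rfl⟩
      exact le_trans (csInf_le hBbdd ⟨x, hx, rfl⟩) (hkey x hx).1
    have hup : Jhat N ω ≤ Jstar + 4 * L / c * ε N := by
      rw [hJhat N ω, hJstar]
      rw [← sub_le_iff_le_add]
      refine le_csInf ⟨_, x₀, hx₀, rfl⟩ ?_
      rintro w ⟨x, hx, rfl⟩
      have h1 := csInf_le hAbdd ⟨x, hx, rfl⟩
      have h2 := (hkey x hx).2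
      linarith
    exact ⟨by linarith, hup⟩
  -- squeeze
  have hεc : Filter.Tendsto (fun N => 4 * L / c * ε N) Filter.atTop (nhds 0) := by
    have := hε0.const_mul (4 * L / c)
    simpa using this
  refine tendsto_of_tendsto_of_tendsto_of_le_of_le' ?_ ?_
    (hfinal.mono fun N hN => hN.1) (hfinal.mono fun N hN => hN.2)
  · simpa using tendsto_const_nhds.sub hεc
  · simpa using tendsto_const_nhds.add hεc
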